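/- arXiv:2505.17215 — 4 statements merged into one kernel-verified Lean document; each statement's English description precedes it below -/
import Mathlib

section
/- Let $h$ be a Hermitian matrix in block form $h = \begin{pmatrix} A & B \\ B^* & D \end{pmatrix}$ with $D$ Hermitian, and suppose $\ker D \subseteq \ker B$. Then for each $* \in \{+,-,0\}$, $n_*(h) = n_*(D) + n_*(A - B D^+ B^*)$, where $D^+$ is the Moore–Penrose pseudoinverse of $D$. -/
open Matrix

/-- Moore–Penrose pseudoinverse conditions. -/
def IsMoorePenrose {ι : Type*} [Fintype ι] (M Mp : Matrix ι ι ℂ) : Prop :=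
  Mp * M * Mp = Mp ∧ M * Mp * M = M ∧ (M * Mp).IsHermitian ∧ (Mp * M).IsHermitian

/-- Number of positive eigenvalues (with multiplicity) of a Hermitian matrix. -/
noncomputable def posCount {ι : Type*} [Fintype ι] [DecidableEq ι] {M : Matrix ι ι ℂ}
    (hM : M.IsHermitian) : ℕ := {i | 0 < hM.eigenvalues i}.ncard

/-- Number of negative eigenvalues (with multiplicity) of a Hermitian matrix. -/
noncomputable def negCount {ι : Type*} [Fintype ι] [DecidableEq ι] {M : Matrix ι ι ℂ}
    (hM : M.IsHermitian) : ℕ := {i | hM.eigenvalues i < 0}.ncard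

/-- Number of zero eigenvalues (with multiplicity) of a Hermitian matrix. -/
noncomputable def zeroCount {ι : Type*} [Fintype ι] [DecidableEq ι] {M : Matrix ι ι ℂ}
    (hM : M.IsHermitian) : ℕ := {i | hM.eigenvalues i = 0}.ncard

namespace HaynsworthAux

open Module
set_option linter.unusedSectionVars false

section Basic

variable {ι : Type*} [Fintype ι] [DecidableEq ι]

/-- The (real part of the) quadratic form of a matrix. -/
noncomputable def q {ι : Type*} [Fintype ι] (M : Matrix ι ι ℂ) (x : ι → ℂ) : ℝ :=
  (star x ⬝ᵥ M.mulVec x).re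

lemma q_zero {ι : Type*} [Fintype ι] (M : Matrix ι ι ℂ) : q M 0 = 0 := by
  simp [q]

def PosOn (M : Matrix ι ι ℂ) (W : Submodule ℂ (ι → ℂ)) : Prop :=
  ∀ x ∈ W, x ≠ 0 → 0 < q M x
def NegOn (M : Matrix ι ι ℂ) (W : Submodule ℂ (ι → ℂ)) : Prop :=
  ∀ x ∈ W, x ≠ 0 → q M x < 0
def NonposOn (M : Matrix ι ι ℂ) (W : Submodule ℂ (ι → ℂ)) : Prop :=
  ∀ x ∈ W, q M x ≤ 0
def NonnegOn (M : Matrix ι ι ℂ) (W : Submodule ℂ (ι → ℂ)) : Prop :=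
  ∀ x ∈ W, 0 ≤ q M x

lemma posOn_nonneg {M : Matrix ι ι ℂ} {W : Submodule ℂ (ι → ℂ)} (h : PosOn M W)
    {x : ι → ℂ} (hx : x ∈ W) : 0 ≤ q M x := by
  by_cases hne : x = 0
  · rw [hne, q_zero]
  · exact (h x hx hne).le

lemma negOn_nonpos {M : Matrix ι ι ℂ} {W : Submodule ℂ (ι → ℂ)} (h : NegOn M W)
    {x : ι → ℂ} (hx : x ∈ W) : q M x ≤ 0 := by
  by_cases hne : x = 0
  · rw [hne, q_zero]
  · exact (h x hx hne).le

lemma rank_bound_pos {M : Matrix ι ι ℂ} {W V : Submodule ℂ (ι → ℂ)}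
    (hW : PosOn M W) (hV : NonposOn M V) :
    finrank ℂ W + finrank ℂ V ≤ Fintype.card ι := by
  have hdisj : W ⊓ V = ⊥ := by
    rw [Submodule.eq_bot_iff]
    intro x hx
    by_contra hne
    exact absurd (hV x hx.2) (not_le.mpr (hW x hx.1 hne))
  have h1 := Submodule.finrank_sup_add_finrank_inf_eq W V
  rw [hdisj] at h1
  have h2 : finrank ℂ ↥(W ⊔ V) ≤ finrank ℂ (ι → ℂ) := Submodule.finrank_le _
  simp only [finrank_bot, add_zero] at h1
  rw [← h1]
  simpa [Module.finrank_pi] using h2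

lemma rank_bound_neg {M : Matrix ι ι ℂ} {W V : Submodule ℂ (ι → ℂ)}
    (hW : NegOn M W) (hV : NonnegOn M V) :
    finrank ℂ W + finrank ℂ V ≤ Fintype.card ι := by
  have hdisj : W ⊓ V = ⊥ := by
    rw [Submodule.eq_bot_iff]
    intro x hx
    by_contra hne
    exact absurd (hV x hx.2) (not_le.mpr (hW x hx.1 hne))
  have h1 := Submodule.finrank_sup_add_finrank_inf_eq W V
  rw [hdisj] at h1
  have h2 : finrank ℂ ↥(W ⊔ V) ≤ finrank ℂ (ι → ℂ) := Submodule.finrank_le _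
  simp only [finrank_bot, add_zero] at h1
  rw [← h1]
  simpa [Module.finrank_pi] using h2

/-- quadratic form through the spectral decomposition -/
lemma q_spectral {M : Matrix ι ι ℂ} (hM : M.IsHermitian) (y : ι → ℂ) :
    q M ((hM.eigenvectorUnitary : Matrix ι ι ℂ) *ᵥ y)
      = ∑ i, hM.eigenvalues i * Complex.normSq (y i) := by
  set U : Matrix ι ι ℂ := (hM.eigenvectorUnitary : Matrix ι ι ℂ) with hU
  have hUU : Uᴴ * U = 1 := by
    simpa [Matrix.star_eq_conjTranspose] using
      Matrix.mem_unitaryGroup_iff'.mp hM.eigenvectorUnitary.2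
  have hspec := hM.spectral_theorem
  rw [q]
  conv_lhs => rw [hspec, Unitary.conjStarAlgAut_apply]
  rw [← Matrix.mulVec_mulVec, ← Matrix.mulVec_mulVec,
    Matrix.star_mulVec, Matrix.dotProduct_mulVec, Matrix.vecMul_vecMul, hUU,
    Matrix.vecMul_one, Matrix.star_eq_conjTranspose, Matrix.mulVec_mulVec,
    Matrix.mulVec_mulVec, mul_assoc, hUU, mul_one]
  rw [dotProduct, Complex.re_sum]
  refine Finset.sum_congr rfl fun i _ => ?_
  rw [Matrix.mulVec_diagonal]
  simp only [Pi.star_apply, Function.comp_apply, RCLike.star_def]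
  rw [show (RCLike.ofReal (hM.eigenvalues i) : ℂ) = Complex.ofReal (hM.eigenvalues i) from rfl]
  rw [show (starRingEnd ℂ) (y i) * ((hM.eigenvalues i : ℂ) * y i)
      = (hM.eigenvalues i : ℂ) * (y i * (starRingEnd ℂ) (y i)) by ring]
  rw [Complex.mul_conj, ← Complex.ofReal_mul, Complex.ofReal_re]

/-- extension by zero as a linear map -/
def extz (P : ι → Prop) [DecidablePred P] : ({i // P i} → ℂ) →ₗ[ℂ] (ι → ℂ) where
  toFun c i := if h : P i then c ⟨i, h⟩ else 0
  map_add' c d := by funext i; by_cases h : P i <;> simp [h]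
  map_smul' a c := by funext i; by_cases h : P i <;> simp [h]

lemma extz_injective (P : ι → Prop) [DecidablePred P] : Function.Injective (extz P) := by
  intro c d h
  funext i
  have := congrFun h i.1
  simpa [extz, i.2] using this

lemma mulVec_injective_of_unitary (U : Matrix ι ι ℂ) (hU : Uᴴ * U = 1) :
    Function.Injective (fun y => U *ᵥ y) := by
  intro y z h
  have := congrArg (fun w => Uᴴ *ᵥ w) h
  simpa [Matrix.mulVec_mulVec, hU] using this

/-- The core spectral subspace lemma. -/
lemma core {M : Matrix ι ι ℂ} (hM : M.IsHermitian) (P : ι → Prop) [DecidablePred P] :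
    ∃ W : Submodule ℂ (ι → ℂ), finrank ℂ W = Fintype.card {i // P i} ∧
      ∀ x ∈ W, x ≠ 0 → ∃ c : ι → ℝ, (∀ i, 0 ≤ c i) ∧ (∀ i, ¬ P i → c i = 0) ∧
        (∃ i, P i ∧ 0 < c i) ∧ q M x = ∑ i, hM.eigenvalues i * c i := by
  set U : Matrix ι ι ℂ := (hM.eigenvectorUnitary : Matrix ι ι ℂ) with hUdef
  have hUU : Uᴴ * U = 1 := by
    simpa [Matrix.star_eq_conjTranspose] using
      Matrix.mem_unitaryGroup_iff'.mp hM.eigenvectorUnitary.2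
  set F : ({i // P i} → ℂ) →ₗ[ℂ] (ι → ℂ) := (Matrix.mulVecLin U).comp (extz P) with hF
  have hFinj : Function.Injective F := by
    intro c d h
    exact extz_injective P (mulVec_injective_of_unitary U hUU (by simpa [hF] using h))
  refine ⟨LinearMap.range F, ?_, ?_⟩
  · rw [LinearMap.finrank_range_of_inj hFinj, Module.finrank_pi]
  · rintro x ⟨c, rfl⟩ hne
    refine ⟨fun i => Complex.normSq (extz P c i), fun i => Complex.normSq_nonneg _,
      fun i hi => by simp [extz, hi], ?_, ?_⟩
    · have hc : c ≠ 0 := by rintro rfl; exact hne (by simp [hF])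
      obtain ⟨j, hj⟩ := Function.ne_iff.mp hc
      exact ⟨j.1, j.2, by simpa [extz, j.2, Complex.normSq_pos] using hj⟩
    · exact q_spectral hM (extz P c)

lemma ncard_eq_card (s : Set ι) [DecidablePred (· ∈ s)] : s.ncard = Fintype.card s := by
  rw [Set.ncard_eq_toFinset_card', Set.toFinset_card]

lemma exists_posOn {M : Matrix ι ι ℂ} (hM : M.IsHermitian) :
    ∃ W, PosOn M W ∧ finrank ℂ W = posCount hM := by
  obtain ⟨W, hd, hq⟩ := core hM (fun i => 0 < hM.eigenvalues i)
  refine ⟨W, ?_, ?_⟩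
  · intro x hx hne
    obtain ⟨c, hc0, hcP, ⟨j, hjP, hjpos⟩, hsum⟩ := hq x hx hne
    rw [hsum]
    refine Finset.sum_pos' (fun i _ => ?_) ⟨j, Finset.mem_univ j, mul_pos hjP hjpos⟩
    by_cases h : 0 < hM.eigenvalues i
    · exact mul_nonneg h.le (hc0 i)
    · rw [hcP i h, mul_zero]
  · rw [hd, posCount, ncard_eq_card]; rfl

lemma exists_negOn {M : Matrix ι ι ℂ} (hM : M.IsHermitian) :
    ∃ W, NegOn M W ∧ finrank ℂ W = negCount hM := by
  obtain ⟨W, hd, hq⟩ := core hM (fun i => hM.eigenvalues i < 0)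
  refine ⟨W, ?_, ?_⟩
  · intro x hx hne
    obtain ⟨c, hc0, hcP, ⟨j, hjP, hjpos⟩, hsum⟩ := hq x hx hne
    rw [hsum, ← neg_pos, ← Finset.sum_neg_distrib]
    refine Finset.sum_pos' (fun i _ => ?_) ⟨j, Finset.mem_univ j, ?_⟩
    · by_cases h : hM.eigenvalues i < 0
      · rw [neg_nonneg]; exact mul_nonpos_of_nonpos_of_nonneg h.le (hc0 i)
      · rw [hcP i h, mul_zero, neg_zero]
    · rw [neg_pos]; exact mul_neg_of_neg_of_pos hjP hjpos
  · rw [hd, negCount, ncard_eq_card]; rfl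

lemma exists_nonposOn {M : Matrix ι ι ℂ} (hM : M.IsHermitian) :
    ∃ W, NonposOn M W ∧ finrank ℂ W = Fintype.card ι - posCount hM := by
  obtain ⟨W, hd, hq⟩ := core hM (fun i => ¬ 0 < hM.eigenvalues i)
  refine ⟨W, ?_, ?_⟩
  · intro x hx
    by_cases hne : x = 0
    · rw [hne, q_zero]
    obtain ⟨c, hc0, hcP, _, hsum⟩ := hq x hx hne
    rw [hsum]
    refine Finset.sum_nonpos fun i _ => ?_
    by_cases h : 0 < hM.eigenvalues i
    · rw [hcP i (not_not_intro h), mul_zero]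
    · exact mul_nonpos_of_nonpos_of_nonneg (not_lt.mp h) (hc0 i)
  · rw [hd, posCount, ncard_eq_card, ← Fintype.card_subtype_compl]; rfl

lemma exists_nonnegOn {M : Matrix ι ι ℂ} (hM : M.IsHermitian) :
    ∃ W, NonnegOn M W ∧ finrank ℂ W = Fintype.card ι - negCount hM := by
  obtain ⟨W, hd, hq⟩ := core hM (fun i => ¬ hM.eigenvalues i < 0)
  refine ⟨W, ?_, ?_⟩
  · intro x hx
    by_cases hne : x = 0
    · rw [hne, q_zero]
    obtain ⟨c, hc0, hcP, _, hsum⟩ := hq x hx hne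
    rw [hsum]
    refine Finset.sum_nonneg fun i _ => ?_
    by_cases h : hM.eigenvalues i < 0
    · rw [hcP i (not_not_intro h), mul_zero]
    · exact mul_nonneg (not_lt.mp h) (hc0 i)
  · rw [hd, negCount, ncard_eq_card, ← Fintype.card_subtype_compl]; rfl

lemma count_partition {M : Matrix ι ι ℂ} (hM : M.IsHermitian) :
    posCount hM + negCount hM + zeroCount hM = Fintype.card ι := by
  rw [posCount, negCount, zeroCount, ncard_eq_card, ncard_eq_card, ncard_eq_card]
  have hdisj : Disjoint (fun i => hM.eigenvalues i < 0) (fun i => hM.eigenvalues i = 0) := by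
    rw [Pi.disjoint_iff]
    intro i
    simp only [Prop.disjoint_iff]
    rintro ⟨h1, h2⟩
    exact absurd h2 (ne_of_lt h1)
  have h1 := Fintype.card_subtype_or_disjoint _ _ hdisj
  have h2 : Fintype.card {i // hM.eigenvalues i < 0 ∨ hM.eigenvalues i = 0}
      = Fintype.card {i // ¬ 0 < hM.eigenvalues i} := by
    apply Fintype.card_congr
    apply Equiv.subtypeEquivRight
    intro i
    constructor
    · rintro (h | h) <;> simp [not_lt, h.le]
    · intro h
      rcases lt_or_eq_of_le (not_lt.mp h) with h' | h'
      · exact Or.inl h'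
      · exact Or.inr h'
  have h3 := Fintype.card_subtype_compl (fun i => 0 < hM.eigenvalues i)
  have h4 : Fintype.card {i // 0 < hM.eigenvalues i} ≤ Fintype.card ι :=
    Fintype.card_subtype_le _
  convert_to Fintype.card {i // 0 < hM.eigenvalues i}
    + Fintype.card {i // hM.eigenvalues i < 0} + Fintype.card {i // hM.eigenvalues i = 0}
    = Fintype.card ι using 2
  · congr 1 <;> exact Fintype.card_congr' rfl
  · exact Fintype.card_congr' rfl
  omega

lemma q_congr (M X : Matrix ι ι ℂ) (x : ι → ℂ) :
    q M (Xᴴ *ᵥ x) = q (X * M * Xᴴ) x := by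
  simp only [q]
  rw [Matrix.star_mulVec, Matrix.conjTranspose_conjTranspose, Matrix.mulVec_mulVec,
    ← Matrix.dotProduct_mulVec, Matrix.mulVec_mulVec, ← mul_assoc]

/-- Congruence transfer: map a subspace along `x ↦ Xᴴ *ᵥ x` for invertible `X`. -/
lemma congr_transfer (X Y : Matrix ι ι ℂ) (hXY : X * Y = 1) (hYX : Y * X = 1)
    (W : Submodule ℂ (ι → ℂ)) :
    ∃ W' : Submodule ℂ (ι → ℂ), finrank ℂ W' = finrank ℂ W ∧
      ∀ x ∈ W, Xᴴ *ᵥ x ∈ W' ∧ ∀ y ∈ W', ∃ x ∈ W, y = Xᴴ *ᵥ x := by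
  let e : (ι → ℂ) ≃ₗ[ℂ] (ι → ℂ) :=
    LinearEquiv.ofLinear (Matrix.mulVecLin Xᴴ) (Matrix.mulVecLin Yᴴ)
      (by rw [← Matrix.mulVecLin_mul, ← Matrix.conjTranspose_mul, hYX,
              Matrix.conjTranspose_one, Matrix.mulVecLin_one])
      (by rw [← Matrix.mulVecLin_mul, ← Matrix.conjTranspose_mul, hXY,
              Matrix.conjTranspose_one, Matrix.mulVecLin_one])
  have he : ∀ v, (e : (ι → ℂ) →ₗ[ℂ] (ι → ℂ)) v = Xᴴ *ᵥ v := fun v => by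
    simp only [e, LinearEquiv.coe_coe, LinearEquiv.ofLinear_apply, Matrix.mulVecLin_apply]
  refine ⟨W.map (e : (ι → ℂ) →ₗ[ℂ] (ι → ℂ)), ?_, ?_⟩
  · exact (LinearEquiv.finrank_map_eq e W)
  · intro x hx
    constructor
    · rw [← he]; exact Submodule.mem_map_of_mem hx
    · rintro y ⟨x', hx', rfl⟩
      exact ⟨x', hx', (he x').symm ▸ rfl⟩

end Basic

section Blocks

variable {κ₁ κ₂ : Type*} [Fintype κ₁] [Fintype κ₂] [DecidableEq κ₁] [DecidableEq κ₂]

lemma q_fromBlocks (S : Matrix κ₁ κ₁ ℂ) (D : Matrix κ₂ κ₂ ℂ) (x : κ₁ ⊕ κ₂ → ℂ) :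
    q (fromBlocks S 0 0 D) x = q S (x ∘ Sum.inl) + q D (x ∘ Sum.inr) := by
  simp only [q, Matrix.mulVec, dotProduct, Fintype.sum_sum_type,
    Matrix.fromBlocks_apply₁₁, Matrix.fromBlocks_apply₁₂, Matrix.fromBlocks_apply₂₁,
    Matrix.fromBlocks_apply₂₂, Matrix.zero_apply, zero_mul, Finset.sum_const_zero,
    add_zero, zero_add, Pi.star_apply, Function.comp_apply, Complex.add_re, ← Complex.re_sum]

/-- Combine submodules of the two summands into one of the sum type. -/
lemma block_submodule (W₁ : Submodule ℂ (κ₁ → ℂ)) (W₂ : Submodule ℂ (κ₂ → ℂ)) :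
    ∃ W : Submodule ℂ (κ₁ ⊕ κ₂ → ℂ),
      Module.finrank ℂ W = Module.finrank ℂ W₁ + Module.finrank ℂ W₂ ∧
      ∀ x, x ∈ W ↔ x ∘ Sum.inl ∈ W₁ ∧ x ∘ Sum.inr ∈ W₂ := by
  set E := LinearEquiv.sumArrowLequivProdArrow κ₁ κ₂ ℂ ℂ
  refine ⟨(W₁.prod W₂).map (E.symm : (κ₁ → ℂ) × (κ₂ → ℂ) →ₗ[ℂ] (κ₁ ⊕ κ₂ → ℂ)), ?_, ?_⟩
  · rw [LinearEquiv.finrank_map_eq E.symm]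
    have e2 : (W₁.prod W₂) ≃ₗ[ℂ] W₁ × W₂ :=
      { toFun := fun x => (⟨x.1.1, x.2.1⟩, ⟨x.1.2, x.2.2⟩)
        invFun := fun y => ⟨(y.1.1, y.2.1), ⟨y.1.2, y.2.2⟩⟩
        map_add' := fun x y => rfl
        map_smul' := fun a x => rfl
        left_inv := fun x => rfl
        right_inv := fun y => rfl }
    rw [e2.finrank_eq, Module.finrank_prod]
  · intro x
    rw [Submodule.mem_map_equiv]
    simp only [Submodule.mem_prod, LinearEquiv.symm_symm]
    rfl

end Blocks

section MatrixAlg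

lemma key_BDpD {m n : ℕ} (B : Matrix (Fin m) (Fin n) ℂ) (D Dp : Matrix (Fin n) (Fin n) ℂ)
    (hDDpD : D * Dp * D = D)
    (hker : ∀ v : Fin n → ℂ, D.mulVec v = 0 → B.mulVec v = 0) :
    B * Dp * D = B := by
  have hDC : D * (1 - Dp * D) = 0 := by
    rw [Matrix.mul_sub, Matrix.mul_one, ← Matrix.mul_assoc, hDDpD, sub_self]
  have hBC : B * (1 - Dp * D) = 0 := by
    ext i j
    have hv : D *ᵥ (fun k => (1 - Dp * D) k j) = 0 := by
      funext l
      have h0 : (D * (1 - Dp * D)) l j = 0 := by rw [hDC]; rfl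
      simpa [Matrix.mulVec, Matrix.mul_apply, dotProduct] using h0
    have h1 := congrFun (hker _ hv) i
    simp only [Matrix.mul_apply, Matrix.mulVec, dotProduct, Pi.zero_apply,
      Matrix.zero_apply] at h1 ⊢
    simpa using h1
  rw [Matrix.mul_sub, Matrix.mul_one, sub_eq_zero] at hBC
  rw [Matrix.mul_assoc]
  exact hBC.symm

lemma congruence_eq {m n : ℕ}
    (A : Matrix (Fin m) (Fin m) ℂ) (B : Matrix (Fin m) (Fin n) ℂ)
    (D Dp : Matrix (Fin n) (Fin n) ℂ) (hD : D.IsHermitian)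
    (hBDpD : B * Dp * D = B) :
    fromBlocks (1 : Matrix (Fin m) (Fin m) ℂ) (-(B * Dp)) 0 (1 : Matrix (Fin n) (Fin n) ℂ)
        * fromBlocks A B Bᴴ D
        * (fromBlocks (1 : Matrix (Fin m) (Fin m) ℂ) (-(B * Dp)) 0
            (1 : Matrix (Fin n) (Fin n) ℂ))ᴴ
      = fromBlocks (A - B * Dp * Bᴴ) 0 0 D := by
  rw [Matrix.fromBlocks_conjTranspose, Matrix.fromBlocks_multiply, Matrix.fromBlocks_multiply]
  have h12 : B + -(B * Dp) * D = 0 := by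
    rw [Matrix.neg_mul, Matrix.mul_assoc, ← Matrix.mul_assoc, hBDpD, add_neg_cancel]
  have h21 : D * (-(B * Dp))ᴴ = -Bᴴ := by
    rw [Matrix.conjTranspose_neg, Matrix.mul_neg, Matrix.conjTranspose_mul]
    have hrw : D * (Dpᴴ * Bᴴ) = (B * Dp * D)ᴴ := by
      rw [Matrix.conjTranspose_mul, Matrix.conjTranspose_mul, hD.eq]
    rw [hrw, hBDpD]
  refine Matrix.fromBlocks_inj.mpr ⟨?_, ?_, ?_, ?_⟩ <;>
    simp only [Matrix.conjTranspose_zero, Matrix.conjTranspose_one, Matrix.one_mul,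
      Matrix.mul_one, Matrix.mul_zero, Matrix.zero_mul, add_zero, zero_add, h12, h21]
  · rw [Matrix.neg_mul, ← sub_eq_add_neg, Matrix.mul_assoc]
  · rw [add_neg_cancel]

end MatrixAlg

end HaynsworthAux

open HaynsworthAux Module

/-- Haynsworth inertia additivity for the block matrix `h = [[A, B], [Bᴴ, D]]` with
possibly singular `D`, under the assumption `ker D ⊆ ker B`:
`n₊(h) = n₊(D) + n₊(A - B D⁺ Bᴴ)` and similarly for `n₋` and `n₀`. -/
theorem haynsworth_inertia {m n : ℕ}
    (A : Matrix (Fin m) (Fin m) ℂ) (B : Matrix (Fin m) (Fin n) ℂ)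
    (D Dp : Matrix (Fin n) (Fin n) ℂ)
    (hA : A.IsHermitian) (hD : D.IsHermitian)
    (hDp : IsMoorePenrose D Dp)
    (hker : ∀ v : Fin n → ℂ, D.mulVec v = 0 → B.mulVec v = 0)
    (hh : (Matrix.fromBlocks A B Bᴴ D).IsHermitian)
    (hS : (A - B * Dp * Bᴴ).IsHermitian) :
    posCount hh = posCount hD + posCount hS ∧
    negCount hh = negCount hD + negCount hS ∧
    zeroCount hh = zeroCount hD + zeroCount hS := by
  obtain ⟨-, hDDpD, -, -⟩ := hDp
  have hBDpD : B * Dp * D = B := key_BDpD B D Dp hDDpD hker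
  set hmat : Matrix (Fin m ⊕ Fin n) (Fin m ⊕ Fin n) ℂ := Matrix.fromBlocks A B Bᴴ D with hmatdef
  set h0 : Matrix (Fin m ⊕ Fin n) (Fin m ⊕ Fin n) ℂ :=
    Matrix.fromBlocks (A - B * Dp * Bᴴ) 0 0 D with h0def
  set X : Matrix (Fin m ⊕ Fin n) (Fin m ⊕ Fin n) ℂ := Matrix.fromBlocks 1 (-(B * Dp)) 0 1
    with hXdef
  set Y : Matrix (Fin m ⊕ Fin n) (Fin m ⊕ Fin n) ℂ := Matrix.fromBlocks 1 (B * Dp) 0 1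
    with hYdef
  have hXY : X * Y = 1 := by
    rw [hXdef, hYdef, Matrix.fromBlocks_multiply, ← Matrix.fromBlocks_one]
    exact Matrix.fromBlocks_inj.mpr ⟨by simp, by simp, by simp, by simp⟩
  have hYX : Y * X = 1 := by
    rw [hXdef, hYdef, Matrix.fromBlocks_multiply, ← Matrix.fromBlocks_one]
    exact Matrix.fromBlocks_inj.mpr ⟨by simp, by simp, by simp, by simp⟩
  have hcong : X * hmat * Xᴴ = h0 := congruence_eq A B D Dp hD hBDpD
  have hmat_eq : hmat = Y * h0 * Yᴴ := by
    rw [← hcong]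
    calc hmat = 1 * hmat * 1 := by rw [Matrix.one_mul, Matrix.mul_one]
    _ = (Y * X) * hmat * (Y * X)ᴴ := by rw [hYX, Matrix.conjTranspose_one]
    _ = Y * (X * hmat * Xᴴ) * Yᴴ := by
        rw [Matrix.conjTranspose_mul]
        simp only [Matrix.mul_assoc]
  have hcard : Fintype.card (Fin m ⊕ Fin n) = m + n := by simp
  have hcardm : Fintype.card (Fin m) = m := Fintype.card_fin m
  have hcardn : Fintype.card (Fin n) = n := Fintype.card_fin n
  -- the partitions
  have PH := count_partition hh
  have PD := count_partition hD
  have PS := count_partition hS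
  rw [hcard] at PH
  rw [hcardm] at PS
  rw [hcardn] at PD
  -- a helper for nonzero components
  have comp_ne : ∀ x : Fin m ⊕ Fin n → ℂ, x ≠ 0 →
      x ∘ Sum.inl ≠ 0 ∨ x ∘ Sum.inr ≠ 0 := by
    intro x hxne
    by_contra hcon
    push_neg at hcon
    apply hxne
    funext i
    cases i with
    | inl a => exact congrFun hcon.1 a
    | inr b => exact congrFun hcon.2 b
  -- posCount hh ≤ posCount hD + posCount hS
  have hpos_le : posCount hh ≤ posCount hD + posCount hS := by
    obtain ⟨W, hWpos, hWrank⟩ := exists_posOn hh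
    obtain ⟨W', hrk, hcor⟩ := congr_transfer Y X hYX hXY W
    have hW'pos : PosOn h0 W' := by
      intro y hy hyne
      obtain ⟨x, hx, rfl⟩ := (hcor 0 W.zero_mem).2 y hy
      have hxne : x ≠ 0 := by rintro rfl; exact hyne (by rw [Matrix.mulVec_zero])
      have h1 := hWpos x hx hxne
      rwa [q_congr h0 Y x, ← hmat_eq]
    obtain ⟨V₁, hV₁, hV₁r⟩ := exists_nonposOn hS
    obtain ⟨V₂, hV₂, hV₂r⟩ := exists_nonposOn hD
    obtain ⟨V, hVr, hVmem⟩ := block_submodule V₁ V₂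
    have hVnp : NonposOn h0 V := fun x hx => by
      rw [h0def, q_fromBlocks]
      exact add_nonpos (hV₁ _ ((hVmem x).mp hx).1) (hV₂ _ ((hVmem x).mp hx).2)
    have hb := rank_bound_pos hW'pos hVnp
    rw [hrk, hWrank, hVr, hV₁r, hV₂r, hcard, hcardm, hcardn] at hb
    omega
  -- posCount hD + posCount hS ≤ posCount hh
  have hpos_ge : posCount hD + posCount hS ≤ posCount hh := by
    obtain ⟨W₁, hW₁, hW₁r⟩ := exists_posOn hS
    obtain ⟨W₂, hW₂, hW₂r⟩ := exists_posOn hD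
    obtain ⟨W, hWr, hWmem⟩ := block_submodule W₁ W₂
    have hWpos : PosOn h0 W := by
      intro x hx hxne
      rw [h0def, q_fromBlocks]
      have h1 := (hWmem x).mp hx
      rcases comp_ne x hxne with hc | hc
      · exact add_pos_of_pos_of_nonneg (hW₁ _ h1.1 hc) (posOn_nonneg hW₂ h1.2)
      · exact add_pos_of_nonneg_of_pos (posOn_nonneg hW₁ h1.1) (hW₂ _ h1.2 hc)
    obtain ⟨W', hrk, hcor⟩ := congr_transfer X Y hXY hYX W
    have hW'pos : PosOn hmat W' := by
      intro y hy hyne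
      obtain ⟨x, hx, rfl⟩ := (hcor 0 W.zero_mem).2 y hy
      have hxne : x ≠ 0 := by rintro rfl; exact hyne (by rw [Matrix.mulVec_zero])
      have h1 := hWpos x hx hxne
      rwa [q_congr hmat X x, hcong]
    obtain ⟨V, hV, hVr⟩ := exists_nonposOn hh
    have hb := rank_bound_pos hW'pos hV
    rw [hrk, hWr, hW₁r, hW₂r, hVr, hcard] at hb
    omega
  -- negCount hh ≤ negCount hD + negCount hS
  have hneg_le : negCount hh ≤ negCount hD + negCount hS := by
    obtain ⟨W, hWneg, hWrank⟩ := exists_negOn hh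
    obtain ⟨W', hrk, hcor⟩ := congr_transfer Y X hYX hXY W
    have hW'neg : NegOn h0 W' := by
      intro y hy hyne
      obtain ⟨x, hx, rfl⟩ := (hcor 0 W.zero_mem).2 y hy
      have hxne : x ≠ 0 := by rintro rfl; exact hyne (by rw [Matrix.mulVec_zero])
      have h1 := hWneg x hx hxne
      rwa [q_congr h0 Y x, ← hmat_eq]
    obtain ⟨V₁, hV₁, hV₁r⟩ := exists_nonnegOn hS
    obtain ⟨V₂, hV₂, hV₂r⟩ := exists_nonnegOn hD
    obtain ⟨V, hVr, hVmem⟩ := block_submodule V₁ V₂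
    have hVnn : NonnegOn h0 V := fun x hx => by
      rw [h0def, q_fromBlocks]
      exact add_nonneg (hV₁ _ ((hVmem x).mp hx).1) (hV₂ _ ((hVmem x).mp hx).2)
    have hb := rank_bound_neg hW'neg hVnn
    rw [hrk, hWrank, hVr, hV₁r, hV₂r, hcard, hcardm, hcardn] at hb
    omega
  -- negCount hD + negCount hS ≤ negCount hh
  have hneg_ge : negCount hD + negCount hS ≤ negCount hh := by
    obtain ⟨W₁, hW₁, hW₁r⟩ := exists_negOn hS
    obtain ⟨W₂, hW₂, hW₂r⟩ := exists_negOn hD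
    obtain ⟨W, hWr, hWmem⟩ := block_submodule W₁ W₂
    have hWneg : NegOn h0 W := by
      intro x hx hxne
      rw [h0def, q_fromBlocks]
      have h1 := (hWmem x).mp hx
      rcases comp_ne x hxne with hc | hc
      · exact add_neg_of_neg_of_nonpos (hW₁ _ h1.1 hc) (negOn_nonpos hW₂ h1.2)
      · exact add_neg_of_nonpos_of_neg (negOn_nonpos hW₁ h1.1) (hW₂ _ h1.2 hc)
    obtain ⟨W', hrk, hcor⟩ := congr_transfer X Y hXY hYX W
    have hW'neg : NegOn hmat W' := by
      intro y hy hyne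
      obtain ⟨x, hx, rfl⟩ := (hcor 0 W.zero_mem).2 y hy
      have hxne : x ≠ 0 := by rintro rfl; exact hyne (by rw [Matrix.mulVec_zero])
      have h1 := hWneg x hx hxne
      rwa [q_congr hmat X x, hcong]
    obtain ⟨V, hV, hVr⟩ := exists_nonnegOn hh
    have hb := rank_bound_neg hW'neg hV
    rw [hrk, hWr, hW₁r, hW₂r, hVr, hcard] at hb
    omega
  refine ⟨by omega, by omega, by omega⟩
end

section
/- Suppose $b = (b_1, \dots, b_d)$ with $b_j > 0$ satisfies the genericity condition: $\sum_{j=1}^d \epsilon_j b_j \neq 0$ for every choice of signs $\epsilon_j \in \{+1,-1\}$. Let $f: \mathbb{R}^{d-1} \to \mathbb{C}$, $f(\theta) = \sum_{j=1}^{d-1} b_j e^{i\theta_j} - b_d$. Then at every point $\theta$ with $f(\theta) = 0$, the real differential $df_\theta: \mathbb{R}^{d-1} \to \mathbb{C} \cong \mathbb{R}^2$ is surjective. -/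
open Complex

/-- If `b` is generic (no signed combination of the lengths vanishes), then at every zero of
the linkage map `f(θ) = ∑_{j<d} bⱼ e^{iθⱼ} - b_d`, the real differential
`v ↦ i ∑_{j<d} bⱼ e^{iθⱼ} vⱼ : ℝ^{d} → ℂ` is surjective.
(Here the lengths are indexed by `Fin (d+1)` and the angles by `Fin d`.) -/
theorem linkage_differential_surjective {d : ℕ} (b : Fin (d + 1) → ℝ)
    (hb : ∀ j, 0 < b j)
    (hgen : ∀ ε : Fin (d + 1) → ℝ, (∀ j, ε j = 1 ∨ ε j = -1) → ∑ j, ε j * b j ≠ 0)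
    (θ : Fin d → ℝ)
    (hθ : (∑ j, (b j.castSucc : ℂ) * Complex.exp (Complex.I * (θ j : ℂ)))
        - (b (Fin.last d) : ℂ) = 0) :
    Function.Surjective (fun v : Fin d → ℝ =>
      Complex.I * ∑ j, (b j.castSucc : ℂ) * Complex.exp (Complex.I * (θ j : ℂ)) * (v j : ℂ)) := by
  set e : Fin d → ℂ := fun j => Complex.exp (Complex.I * (θ j : ℂ)) with he_def
  have habs : ∀ j, ‖e j‖ = 1 := by
    intro j
    simp only [he_def, mul_comm Complex.I]
    exact Complex.norm_exp_ofReal_mul_I _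
  have hnormSq : ∀ j, (e j).re * (e j).re + (e j).im * (e j).im = 1 := by
    intro j
    have := Complex.normSq_eq_norm_sq (e j)
    rw [habs j] at this
    simpa [Complex.normSq_apply] using this
  by_cases hcol : ∀ j k, (e j).re * (e k).im - (e j).im * (e k).re = 0
  · -- collinear case: contradiction with genericity
    exfalso
    rcases Nat.eq_zero_or_pos d with hd | hd
    · subst hd
      simp only [Finset.univ_eq_empty, Finset.sum_empty, zero_sub, neg_eq_zero,
        Complex.ofReal_eq_zero] at hθ
      exact (hb (Fin.last 0)).ne' hθ
    · set j₀ : Fin d := ⟨0, hd⟩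
      -- each e j = ε_j * e j₀ with ε_j = ±1 ... work with w j := e j * conj (e j₀)
      set w : Fin d → ℂ := fun j => e j * (starRingEnd ℂ) (e j₀) with hw_def
      have hwim : ∀ j, (w j).im = 0 := by
        intro j
        have := hcol j₀ j
        simp only [hw_def, Complex.mul_im, Complex.conj_re, Complex.conj_im]
        nlinarith [hcol j₀ j]
      have hwre : ∀ j, (w j).re = 1 ∨ (w j).re = -1 := by
        intro j
        have h1 : (w j).re * (w j).re = 1 := by
          have h2 : (w j).re * (w j).re + (w j).im * (w j).im =
              ((e j).re * (e j).re + (e j).im * (e j).im) *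
              ((e j₀).re * (e j₀).re + (e j₀).im * (e j₀).im) := by
            simp only [hw_def, Complex.mul_re, Complex.mul_im, Complex.conj_re, Complex.conj_im]
            ring
          rw [hnormSq j, hnormSq j₀, hwim j] at h2
          linarith
        rcases mul_self_eq_one_iff.mp h1 with h | h
        · exact Or.inl h
        · exact Or.inr h
      -- multiply hθ by conj (e j₀)
      have hθ' : (∑ j, (b j.castSucc : ℂ) * w j) = (b (Fin.last d) : ℂ) * (starRingEnd ℂ) (e j₀) := by
        have := sub_eq_zero.mp hθ
        calc (∑ j, (b j.castSucc : ℂ) * w j)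
            = (∑ j, (b j.castSucc : ℂ) * e j) * (starRingEnd ℂ) (e j₀) := by
              rw [Finset.sum_mul]; congr 1; ext j; rw [hw_def]; ring
          _ = (b (Fin.last d) : ℂ) * (starRingEnd ℂ) (e j₀) := by rw [this]
      -- imaginary part: e j₀ is real
      have him : (e j₀).im = 0 := by
        have h1 := congrArg Complex.im hθ'
        simp only [Complex.im_sum, Complex.mul_im, Complex.ofReal_re, Complex.ofReal_im,
          Complex.conj_re, Complex.conj_im, hwim, mul_zero, zero_mul, add_zero, zero_add,
          Finset.sum_const_zero, mul_neg] at h1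
        have h2 : b (Fin.last d) * (e j₀).im = 0 := by linarith
        rcases mul_eq_zero.mp h2 with h | h
        · exact absurd h (hb (Fin.last d)).ne'
        · exact h
      have hre : (e j₀).re = 1 ∨ (e j₀).re = -1 := by
        have h1 := hnormSq j₀
        rw [him] at h1
        norm_num at h1
        exact mul_self_eq_one_iff.mp (by linarith)
      -- real part
      have hre' : (∑ j, b j.castSucc * (w j).re) = b (Fin.last d) * (e j₀).re := by
        have h1 := congrArg Complex.re hθ'
        simp only [Complex.re_sum, Complex.mul_re, Complex.ofReal_re, Complex.ofReal_im,
          Complex.conj_re, Complex.conj_im, hwim, mul_zero, zero_mul, sub_zero, him,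
          mul_neg, neg_zero] at h1
        exact h1
      -- build sign vector
      set ε : Fin (d + 1) → ℝ := Fin.lastCases (-(e j₀).re) (fun j => (w j).re) with hε_def
      have hεlast : ε (Fin.last d) = -(e j₀).re := by
        simp [hε_def]
      have hεcast : ∀ j : Fin d, ε j.castSucc = (w j).re := by
        intro j; simp [hε_def]
      apply hgen ε
      · intro j
        refine Fin.lastCases ?_ ?_ j
        · rw [hεlast]
          rcases hre with h | h
          · right; rw [h]
          · left; rw [h]; ring
        · intro i
          rw [hεcast]
          exact hwre i
      · rw [Fin.sum_univ_castSucc]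
        simp only [hεcast, hεlast]
        have : (∑ j : Fin d, (w j).re * b j.castSucc) = ∑ j : Fin d, b j.castSucc * (w j).re := by
          congr 1; ext j; ring
        rw [this, hre']
        ring
  · -- non-collinear case: surjective
    push_neg at hcol
    obtain ⟨j, k, hjk⟩ := hcol
    set cJ : ℂ := (b j.castSucc : ℂ) * e j with hcJ
    set cK : ℂ := (b k.castSucc : ℂ) * e k with hcK
    have hD : cJ.re * cK.im - cJ.im * cK.re ≠ 0 := by
      simp only [hcJ, hcK, Complex.mul_re, Complex.mul_im, Complex.ofReal_re, Complex.ofReal_im]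
      have hbj := (hb j.castSucc).ne'
      have hbk := (hb k.castSucc).ne'
      intro h
      apply hjk
      have h2 : b j.castSucc * b k.castSucc * ((e j).re * (e k).im - (e j).im * (e k).re) = 0 := by
        nlinarith [h]
      rcases mul_eq_zero.mp h2 with h3 | h3
      · exact absurd (mul_eq_zero.mp h3) (by push_neg; exact ⟨hbj, hbk⟩)
      · exact h3
    have hne : j ≠ k := by
      intro h; apply hjk; rw [h]; ring
    set D : ℝ := cJ.re * cK.im - cJ.im * cK.re with hDdef
    intro z
    set wz : ℂ := -Complex.I * z with hwz
    set a : ℝ := (wz.re * cK.im - wz.im * cK.re) / D with ha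
    set a' : ℝ := (cJ.re * wz.im - cJ.im * wz.re) / D with ha'
    refine ⟨fun m => (if m = j then a else 0) + (if m = k then a' else 0), ?_⟩
    have hsum : (∑ m, (b m.castSucc : ℂ) * e m *
        (((if m = j then a else 0) + (if m = k then a' else 0) : ℝ) : ℂ))
        = cJ * (a : ℂ) + cK * (a' : ℂ) := by
      push_cast
      simp only [mul_add]
      rw [Finset.sum_add_distrib]
      congr 1
      · rw [Finset.sum_eq_single j]
        · simp [hcJ]
        · intro m _ hm
          simp [hm]
        · simp
      · rw [Finset.sum_eq_single k]
        · simp [hcK]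
        · intro m _ hm
          simp [hm]
        · simp
    have hsolve : cJ * (a : ℂ) + cK * (a' : ℂ) = wz := by
      apply Complex.ext
      · simp only [Complex.add_re, Complex.mul_re, Complex.ofReal_re, Complex.ofReal_im,
          mul_zero, sub_zero, ha, ha']
        field_simp
        ring
      · simp only [Complex.add_im, Complex.mul_im, Complex.ofReal_re, Complex.ofReal_im,
          zero_mul, add_zero, ha, ha']
        field_simp
        ring
    simp only [he_def] at hsum
    dsimp only
    rw [hsum, hsolve, hwz]
    calc Complex.I * (-Complex.I * z) = -(Complex.I * Complex.I) * z := by ring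
      _ = z := by rw [Complex.I_mul_I]; ring
end

section
/- Let $G = (V, E)$ be a finite simple connected graph, $V_N \subseteq V$ an admissible support, and let $V_{ZZ}$ (the residual vertices) and $E_{ZZ}$ (edges with both endpoints outside $V_N$) be defined as in the context. Then $|E_{ZZ}| \geq |V_{ZZ}|$. -/
/-- `VN` is an admissible support in `G`: the induced subgraph on `VN` is connected, and every
vertex outside `VN` has either no neighbors in `VN` or at least three neighbors in `VN`. -/
def AdmissibleSupport {V : Type*} (G : SimpleGraph V) (VN : Set V) : Prop :=
  (G.induce VN).Connected ∧
    ∀ r ∉ VN, (∀ s ∈ VN, ¬ G.Adj r s) ∨ 3 ≤ {s | s ∈ VN ∧ G.Adj r s}.ncard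

/-- For an admissible support `VN` in a finite simple connected graph, the number of edges with
both endpoints outside `VN` is at least the number of residual vertices (vertices outside `VN`
with no neighbor in `VN`). -/
theorem card_VZZ_le_card_EZZ {V : Type*} [Fintype V] (G : SimpleGraph V)
    (hconn : G.Connected) (VN : Set V) (hadm : AdmissibleSupport G VN) :
    {r | r ∉ VN ∧ ∀ s ∈ VN, ¬ G.Adj r s}.ncard
      ≤ {e | e ∈ G.edgeSet ∧ ∀ v ∈ e, v ∉ VN}.ncard := by
  classical
  obtain ⟨⟨s₀, hs₀⟩⟩ := hadm.1.nonempty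
  set S : Set V := {r | r ∉ VN ∧ ∀ s ∈ VN, ¬ G.Adj r s} with hS
  have key : ∀ r : V, ∃ r', r ∈ S → G.Adj r r' ∧ G.dist r' s₀ + 1 = G.dist r s₀ := by
    intro r
    by_cases hr : r ∈ S
    · have hne : r ≠ s₀ := fun h => hr.1 (h ▸ hs₀)
      have hreach : G.Reachable r s₀ := hconn r s₀
      obtain ⟨p, hp⟩ := hreach.exists_walk_length_eq_dist
      have hpos : 0 < G.dist r s₀ := hconn.pos_dist_of_ne hne
      cases p with
      | nil => simp at hp; exact absurd rfl hne
      | cons h q =>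
        rename_i r'
        refine ⟨r', fun _ => ⟨h, ?_⟩⟩
        have h1 : G.dist r' s₀ ≤ q.length := SimpleGraph.dist_le q
        have h2 : G.dist r s₀ ≤ G.dist r' s₀ + 1 := by
          obtain ⟨q', hq'⟩ := (hconn r' s₀).exists_walk_length_eq_dist
          have := SimpleGraph.dist_le (SimpleGraph.Walk.cons h q')
          simpa [hq'] using this
        simp [SimpleGraph.Walk.length_cons] at hp
        omega
    · exact ⟨r, fun h => absurd h hr⟩
  choose f hf using key
  apply Set.ncard_le_ncard_of_injOn (fun r => s(r, f r))
  · rintro r hr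
    have ⟨hadj, _⟩ := hf r hr
    refine ⟨hadj, ?_⟩
    intro v hv
    rcases Sym2.mem_iff.mp hv with rfl | rfl
    · exact hr.1
    · intro hvN
      exact hr.2 _ hvN hadj
  · rintro r₁ h₁ r₂ h₂ he
    simp only [Sym2.eq, Sym2.rel_iff', Prod.mk.injEq, Prod.swap_prod_mk] at he
    rcases he with ⟨rfl, -⟩ | ⟨he1, he2⟩
    · rfl
    · have d1 := (hf _ h₁).2
      have d2 := (hf _ h₂).2
      rw [he2] at d1
      rw [← he1] at d2
      omega
end

section
/- Let $h$ be an $n \times n$ real symmetric matrix strictly supported on a connected graph $G$ (i.e., $h_{rs} \neq 0$ iff $(rs) \in E$ for $r \neq s$), and suppose every eigenvector of $h$ is nowhere vanishing. If $G$ is a tree and $\lambda_k$ is the $k$-th smallest eigenvalue of $h$ (all eigenvalues simple) with eigenvector $\psi$, then the nodal count $\nu(h,k) = |\{(rs) \in E : \psi_r h_{rs}\psi_s > 0\}|$ equals $k - 1$. -/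
open Matrix Finset Module

private lemma fiedler_negdef_le {ι : Type*} [Fintype ι] (c : ι → ℝ)
    (S : Submodule ℝ (ι → ℝ))
    (hS : ∀ y ∈ S, y ≠ 0 → ∑ i, c i * y i ^ 2 < 0) :
    finrank ℝ S ≤ (Finset.univ.filter fun i => c i < 0).card := by
  classical
  let π : (ι → ℝ) →ₗ[ℝ] ({i // c i < 0} → ℝ) := LinearMap.pi fun j => LinearMap.proj j.1
  have hinj : Function.Injective (π.comp S.subtype) := by
    rw [← LinearMap.ker_eq_bot, LinearMap.ker_eq_bot']
    intro m hm
    have hm' : ∀ j : {i // c i < 0}, (m : ι → ℝ) j.1 = 0 := fun j => congrFun hm j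
    have h0 : (m : ι → ℝ) = 0 := by
      by_contra hne
      have hlt := hS m m.2 hne
      have hge : 0 ≤ ∑ i, c i * (m : ι → ℝ) i ^ 2 := by
        apply Finset.sum_nonneg
        intro i _
        by_cases hc : c i < 0
        · simp [hm' ⟨i, hc⟩]
        · exact mul_nonneg (not_lt.mp hc) (sq_nonneg _)
      linarith
    exact Subtype.ext h0
  calc finrank ℝ S ≤ finrank ℝ ({i // c i < 0} → ℝ) :=
        LinearMap.finrank_le_finrank_of_injective hinj
    _ = (Finset.univ.filter fun i => c i < 0).card := by
        rw [finrank_pi]; exact Fintype.card_subtype _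

private lemma fiedler_negdef_exists {ι : Type*} [Fintype ι] (c : ι → ℝ) :
    ∃ S : Submodule ℝ (ι → ℝ),
      finrank ℝ S = (Finset.univ.filter fun i => c i < 0).card ∧
      ∀ y ∈ S, y ≠ 0 → ∑ i, c i * y i ^ 2 < 0 := by
  classical
  let ext : ({i // c i < 0} → ℝ) →ₗ[ℝ] (ι → ℝ) :=
    { toFun := fun z i => if h : c i < 0 then z ⟨i, h⟩ else 0
      map_add' := by intro a b; funext i; by_cases h : c i < 0 <;> simp [h]
      map_smul' := by intro m a; funext i; by_cases h : c i < 0 <;> simp [h] }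
  have hinj : Function.Injective ext := by
    intro u v huv
    funext j
    have := congrFun huv j.1
    simpa [ext, j.2] using this
  refine ⟨LinearMap.range ext, ?_, ?_⟩
  · rw [LinearMap.finrank_range_of_inj hinj, finrank_pi]
    exact Fintype.card_subtype _
  · rintro y ⟨z, rfl⟩ hne
    have hterm : ∀ i ∈ Finset.univ, c i * (ext z) i ^ 2 ≤ 0 := by
      intro i _
      by_cases h : c i < 0
      · exact mul_nonpos_of_nonpos_of_nonneg h.le (sq_nonneg _)
      · simp [ext, h]
    obtain ⟨i, hi⟩ : ∃ i, (ext z) i ≠ 0 := by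
      by_contra hc; push_neg at hc; exact hne (funext hc)
    have hci : c i < 0 := by
      by_contra h; exact hi (by simp [ext, h])
    have hstrict : c i * (ext z) i ^ 2 < 0 :=
      mul_neg_of_neg_of_pos hci (by positivity)
    have := Finset.sum_lt_sum (g := fun _ => (0:ℝ)) hterm
      ⟨i, Finset.mem_univ i, by simpa using hstrict⟩
    simpa using this

private lemma fiedler_finrank_le_map {K V W : Type*} [Field K] [AddCommGroup V] [Module K V]
    [AddCommGroup W] [Module K W] [FiniteDimensional K W] (f : V →ₗ[K] W) (S : Submodule K V)
    (h : ∀ x ∈ S, f x = 0 → x = 0) : finrank K S ≤ finrank K (S.map f) := by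
  let g := (f.domRestrict S).codRestrict (S.map f)
    (fun x => Submodule.mem_map_of_mem x.2)
  have hg : Function.Injective g := by
    rw [← LinearMap.ker_eq_bot, LinearMap.ker_eq_bot']
    intro m hm
    have : f (m : V) = 0 := congrArg Subtype.val hm
    exact Subtype.ext (h m m.2 this)
  exact LinearMap.finrank_le_finrank_of_injective hg

private lemma fiedler_le_of_quadform {n ι : Type*} [Fintype n] [Fintype ι] (c : ι → ℝ)
    (T : (n → ℝ) →ₗ[ℝ] (ι → ℝ)) (q : (n → ℝ) → ℝ)
    (hq : ∀ x, q x = ∑ i, c i * T x i ^ 2)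
    (S : Submodule ℝ (n → ℝ)) (hS : ∀ x ∈ S, x ≠ 0 → q x < 0) :
    finrank ℝ S ≤ (Finset.univ.filter fun i => c i < 0).card := by
  have hker : ∀ x ∈ S, T x = 0 → x = 0 := by
    intro x hx hT
    by_contra hne
    have := hS x hx hne
    rw [hq, hT] at this
    simp at this
  have h1 : ∀ y ∈ S.map T, y ≠ 0 → ∑ i, c i * y i ^ 2 < 0 := by
    rintro y ⟨x, hx, rfl⟩ hne
    rw [← hq]
    exact hS x hx (fun h0 => hne (by rw [h0, map_zero]))
  exact le_trans (fiedler_finrank_le_map T S hker) (fiedler_negdef_le c _ h1)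

private lemma fiedler_exists_of_quadform {n ι : Type*} [Fintype n] [Fintype ι] (c : ι → ℝ)
    (T : (n → ℝ) →ₗ[ℝ] (ι → ℝ)) (hsurj : LinearMap.range T = ⊤) (q : (n → ℝ) → ℝ)
    (hq : ∀ x, q x = ∑ i, c i * T x i ^ 2) :
    ∃ S : Submodule ℝ (n → ℝ),
      finrank ℝ S = (Finset.univ.filter fun i => c i < 0).card ∧
      ∀ x ∈ S, x ≠ 0 → q x < 0 := by
  obtain ⟨R, hR⟩ := T.exists_rightInverse_of_surjective hsurj
  have hTR : ∀ y, T (R y) = y := fun y => LinearMap.congr_fun hR y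
  obtain ⟨C, hC1, hC2⟩ := fiedler_negdef_exists c
  have hRker : ∀ y ∈ C, R y = 0 → y = 0 := by
    intro y _ h0
    have := hTR y
    rw [h0, map_zero] at this
    exact this.symm
  refine ⟨C.map R, ?_, ?_⟩
  · have heq : finrank ℝ (C.map R) = finrank ℝ C :=
      le_antisymm (Submodule.finrank_map_le R C) (fiedler_finrank_le_map R C hRker)
    rw [heq, hC1]
  · rintro x ⟨y, hy, rfl⟩ hne
    have hy0 : y ≠ 0 := fun h => hne (by rw [h, map_zero])
    rw [hq]
    have : ∀ i, T (R y) i = y i := fun i => congrFun (hTR y) i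
    simp only [this]
    exact hC2 y hy hy0

private lemma fiedler_count_eq {n ι κ : Type*} [Fintype n] [Fintype ι] [Fintype κ]
    (q : (n → ℝ) → ℝ) (c : ι → ℝ) (d : κ → ℝ)
    (T : (n → ℝ) →ₗ[ℝ] (ι → ℝ)) (T' : (n → ℝ) →ₗ[ℝ] (κ → ℝ))
    (hT : LinearMap.range T = ⊤) (hT' : LinearMap.range T' = ⊤)
    (hq : ∀ x, q x = ∑ i, c i * T x i ^ 2) (hq' : ∀ x, q x = ∑ j, d j * T' x j ^ 2) :
    (Finset.univ.filter fun i => c i < 0).card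
      = (Finset.univ.filter fun j => d j < 0).card := by
  apply le_antisymm
  · obtain ⟨S, h1, h2⟩ := fiedler_exists_of_quadform c T hT q hq
    rw [← h1]
    exact fiedler_le_of_quadform d T' q hq' S h2
  · obtain ⟨S, h1, h2⟩ := fiedler_exists_of_quadform d T' hT' q hq'
    rw [← h1]
    exact fiedler_le_of_quadform c T q hq S h2

private lemma fiedler_sum_pairs {V : Type*} [Fintype V] [DecidableEq V] (G : SimpleGraph V)
    [Fintype G.edgeSet] {M : Type*} [AddCommMonoid M] (f : V → V → M)
    (hsymm : ∀ r s, f r s = f s r) (hsupp : ∀ r s, ¬ G.Adj r s → f r s = 0) :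
    ∑ r, ∑ s, f r s = ∑ e ∈ G.edgeFinset, 2 • Sym2.lift ⟨f, hsymm⟩ e := by
  classical
  have h1 : ∑ r, ∑ s, f r s = ∑ p ∈ Finset.univ ×ˢ Finset.univ, f p.1 p.2 := by
    rw [Finset.sum_product]
  have h2 : ∑ p ∈ (Finset.univ ×ˢ Finset.univ).filter (fun p : V × V => G.Adj p.1 p.2), f p.1 p.2
      = ∑ p ∈ Finset.univ ×ˢ Finset.univ, f p.1 p.2 := by
    apply Finset.sum_filter_of_ne
    intro p _ hne
    by_contra hadj
    exact hne (hsupp _ _ hadj)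
  have hmaps : ∀ p ∈ (Finset.univ ×ˢ Finset.univ).filter (fun p : V × V => G.Adj p.1 p.2),
      s(p.1, p.2) ∈ G.edgeFinset := by
    intro p hp
    rw [Finset.mem_filter] at hp
    rw [SimpleGraph.mem_edgeFinset]
    exact hp.2
  rw [h1, ← h2, ← Finset.sum_fiberwise_of_maps_to hmaps (fun p => f p.1 p.2)]
  apply Finset.sum_congr rfl
  intro e he
  induction e using Sym2.ind with
  | _ a b =>
    have hab : G.Adj a b := by rwa [SimpleGraph.mem_edgeFinset, SimpleGraph.mem_edgeSet] at he
    have hne : a ≠ b := hab.ne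
    have hfib : ((Finset.univ ×ˢ Finset.univ).filter (fun p : V × V => G.Adj p.1 p.2)).filter
        (fun p => s(p.1, p.2) = s(a, b)) = {(a, b), (b, a)} := by
      ext ⟨x, y⟩
      simp only [Finset.mem_filter, Finset.mem_product, Finset.mem_univ, true_and,
        Finset.mem_insert, Finset.mem_singleton, Prod.mk.injEq]
      constructor
      · rintro ⟨-, hxy⟩
        rcases Sym2.eq_iff.mp hxy with ⟨h1, h2⟩ | ⟨h1, h2⟩
        · exact Or.inl ⟨h1, h2⟩
        · exact Or.inr ⟨h1, h2⟩
      · rintro (⟨rfl, rfl⟩ | ⟨rfl, rfl⟩)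
        · exact ⟨hab, rfl⟩
        · exact ⟨hab.symm, Sym2.eq_swap⟩
    rw [hfib, Finset.sum_pair (by simp [hne, Prod.ext_iff]), Sym2.lift_mk]
    show f a b + f b a = 2 • f a b
    rw [hsymm b a, two_smul]

private lemma fiedler_quad_conj {V : Type*} [Fintype V] [DecidableEq V]
    (U : Matrix V V ℝ) (c : V → ℝ) (x : V → ℝ) :
    x ⬝ᵥ (U * diagonal c * star U) *ᵥ x = ∑ i, c i * ((star U) *ᵥ x) i ^ 2 := by
  have hx : x ᵥ* U = (star U) *ᵥ x := by
    funext i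
    simp only [vecMul, mulVec, dotProduct, Matrix.star_apply, star_trivial]
    exact Finset.sum_congr rfl fun r _ => mul_comm _ _
  have h1 : (U * diagonal c * star U) *ᵥ x = U *ᵥ ((diagonal c) *ᵥ ((star U) *ᵥ x)) := by
    rw [← mulVec_mulVec, ← mulVec_mulVec]
  rw [h1, dotProduct_mulVec, hx]
  simp only [dotProduct, mulVec_diagonal]
  exact Finset.sum_congr rfl fun i _ => by ring

/-- Fiedler's theorem on nodal counts of trees: for a real symmetric matrix strictly supported
on a finite tree, with simple eigenvalues and nowhere-vanishing eigenvectors, the number of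
edges `(rs)` with `ψ_r h_{rs} ψ_s > 0` for the eigenvector `ψ` of the eigenvalue `λ` equals
`k - 1`, where `k - 1` is the number of eigenvalues below `λ`.  (Both sides are stated as
counts of ordered pairs, i.e. doubled.) -/
theorem fiedler_tree_nodal_count {V : Type*} [Fintype V] [DecidableEq V]
    (G : SimpleGraph V) (hconn : G.Connected) (hacyclic : G.IsAcyclic)
    (h : Matrix V V ℝ) (hherm : h.IsHermitian)
    (hsupp : ∀ r s, r ≠ s → (h r s ≠ 0 ↔ G.Adj r s))
    (hsimple : Function.Injective hherm.eigenvalues)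
    (hnonvanish : ∀ (μ : ℝ) (φ : V → ℝ), φ ≠ 0 → h.mulVec φ = μ • φ → ∀ v, φ v ≠ 0)
    (lam : ℝ) (ψ : V → ℝ) (hψ : ψ ≠ 0) (heig : h.mulVec ψ = lam • ψ) :
    {p : V × V | G.Adj p.1 p.2 ∧ 0 < ψ p.1 * h p.1 p.2 * ψ p.2}.ncard
      = 2 * {i | hherm.eigenvalues i < lam}.ncard := by
  classical
  haveI : Fintype G.edgeSet := Fintype.ofFinite _
  have hψv : ∀ v, ψ v ≠ 0 := hnonvanish lam ψ hψ heig
  have hsymm2 : ∀ r s, h r s = h s r := by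
    intro r s
    simpa using hherm.apply s r
  -- the matrix A = h - λ and its quadratic form q
  set A : Matrix V V ℝ := h - lam • (1 : Matrix V V ℝ) with hAdef
  have hAsymm : ∀ r s, A r s = A s r := by
    intro r s
    by_cases hrs : r = s
    · rw [hrs]
    · simp [hAdef, hsymm2 r s, Matrix.one_apply_ne hrs, Matrix.one_apply_ne (Ne.symm hrs)]
  have hAψ : A *ᵥ ψ = 0 := by
    rw [hAdef, Matrix.sub_mulVec, Matrix.smul_mulVec, Matrix.one_mulVec, heig, sub_self]
  set q : (V → ℝ) → ℝ := fun x => x ⬝ᵥ A *ᵥ x with hqdef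
  -- edge weight function
  have hwsymm : ∀ r s, ψ r * h r s * ψ s = ψ s * h s r * ψ r := by
    intro r s; rw [hsymm2 r s]; ring
  set w : Sym2 V → ℝ := Sym2.lift ⟨fun r s => ψ r * h r s * ψ s, hwsymm⟩ with hwdef
  set ea : Sym2 V → V := fun e => (Quot.out e).1 with headef
  set eb : Sym2 V → V := fun e => (Quot.out e).2 with hebdef
  have hout : ∀ e : Sym2 V, s(ea e, eb e) = e := fun e => Quot.out_eq e
  have hwval : ∀ e : Sym2 V, w e = ψ (ea e) * h (ea e) (eb e) * ψ (eb e) := by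
    intro e
    conv_lhs => rw [← hout e]
    rw [hwdef, Sym2.lift_mk]
  -- the scaled difference map T
  set T : (V → ℝ) →ₗ[ℝ] (↥G.edgeFinset → ℝ) :=
    { toFun := fun x e => x (ea e.1) * (ψ (ea e.1))⁻¹ - x (eb e.1) * (ψ (eb e.1))⁻¹
      map_add' := by intro x y; funext e; simp; ring
      map_smul' := by intro m x; funext e; simp; ring } with hTdef
  set c : ↥G.edgeFinset → ℝ := fun e => - w e.1 with hcdef
  -- spectral data
  set U : Matrix V V ℝ := (hherm.eigenvectorUnitary : Matrix V V ℝ) with hUdef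
  set T' : (V → ℝ) →ₗ[ℝ] (V → ℝ) := (star U).mulVecLin with hT'def
  set d : V → ℝ := fun i => hherm.eigenvalues i - lam with hddef
  have hUU : U * star U = 1 := Matrix.mem_unitaryGroup_iff.mp hherm.eigenvectorUnitary.2
  have hUU' : star U * U = 1 := mul_eq_one_comm.mp hUU
  -- tree-side representation of q
  have hq : ∀ x, q x = ∑ e : ↥G.edgeFinset, c e * T x e ^ 2 := by
    intro x
    set y : V → ℝ := fun v => x v * (ψ v)⁻¹ with hydef
    have hxy : ∀ v, x v = ψ v * y v := by
      intro v
      simp only [hydef]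
      rw [mul_comm (ψ v), mul_assoc, inv_mul_cancel₀ (hψv v), mul_one]
    set F : V → V → ℝ := fun r s => ψ r * h r s * ψ s * (y r - y s) ^ 2 with hFdef
    have hFsymm : ∀ r s, F r s = F s r := by
      intro r s; rw [hFdef]; simp only; rw [hsymm2 r s]; ring
    have hFsupp : ∀ r s, ¬ G.Adj r s → F r s = 0 := by
      intro r s hadj
      by_cases hrs : r = s
      · subst hrs; simp [hFdef]
      · have : h r s = 0 := not_not.mp (fun hh => hadj ((hsupp r s hrs).mp hh))
        simp [hFdef, this]
    have hrow : ∀ r, ∑ s, ψ r * A r s * ψ s = 0 := by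
      intro r
      have h0 : (A *ᵥ ψ) r = 0 := by rw [hAψ]; rfl
      calc ∑ s, ψ r * A r s * ψ s = ψ r * ∑ s, A r s * ψ s := by
            rw [Finset.mul_sum]; exact Finset.sum_congr rfl fun s _ => by ring
        _ = ψ r * (A *ᵥ ψ) r := rfl
        _ = 0 := by rw [h0, mul_zero]
    have hcol : ∀ s, ∑ r, ψ r * A r s * ψ s = 0 := by
      intro s
      rw [show ∑ r, ψ r * A r s * ψ s = ∑ r, ψ s * A s r * ψ r from
        Finset.sum_congr rfl fun r _ => by rw [hAsymm r s]; ring]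
      exact hrow s
    have hFA : ∀ r s, F r s = ψ r * A r s * ψ s * (y r - y s) ^ 2 := by
      intro r s
      by_cases hrs : r = s
      · subst hrs; simp [hFdef]
      · have : A r s = h r s := by simp [hAdef, Matrix.one_apply_ne hrs]
        rw [hFdef]; simp only; rw [this]
    have hq0 : q x = ∑ r, ∑ s, ψ r * A r s * ψ s * (y r * y s) := by
      show x ⬝ᵥ A *ᵥ x = _
      simp only [dotProduct, mulVec, Finset.mul_sum]
      refine Finset.sum_congr rfl fun r _ => Finset.sum_congr rfl fun s _ => ?_
      rw [hxy r, hxy s]; ring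
    have hexp : ∑ r, ∑ s, F r s = - (2 * q x) := by
      have key : ∀ r s, F r s = ψ r * A r s * ψ s * y r ^ 2 + ψ r * A r s * ψ s * y s ^ 2
          - 2 * (ψ r * A r s * ψ s * (y r * y s)) := by
        intro r s; rw [hFA]; ring
      have e1 : ∑ r, ∑ s, ψ r * A r s * ψ s * y r ^ 2 = 0 := by
        apply Finset.sum_eq_zero
        intro r _
        rw [show ∑ s, ψ r * A r s * ψ s * y r ^ 2 = (∑ s, ψ r * A r s * ψ s) * y r ^ 2 from
          (Finset.sum_mul _ _ _).symm, hrow r, zero_mul]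
      have e2 : ∑ r, ∑ s, ψ r * A r s * ψ s * y s ^ 2 = 0 := by
        rw [Finset.sum_comm]
        apply Finset.sum_eq_zero
        intro s _
        rw [show ∑ r, ψ r * A r s * ψ s * y s ^ 2 = (∑ r, ψ r * A r s * ψ s) * y s ^ 2 from
          (Finset.sum_mul _ _ _).symm, hcol s, zero_mul]
      calc ∑ r, ∑ s, F r s
          = ∑ r, ∑ s, (ψ r * A r s * ψ s * y r ^ 2 + ψ r * A r s * ψ s * y s ^ 2
              - 2 * (ψ r * A r s * ψ s * (y r * y s))) :=
            Finset.sum_congr rfl fun r _ => Finset.sum_congr rfl fun s _ => key r s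
        _ = (∑ r, ∑ s, ψ r * A r s * ψ s * y r ^ 2)
              + (∑ r, ∑ s, ψ r * A r s * ψ s * y s ^ 2)
              - 2 * (∑ r, ∑ s, ψ r * A r s * ψ s * (y r * y s)) := by
            simp [Finset.sum_add_distrib, Finset.sum_sub_distrib, Finset.mul_sum]
        _ = - (2 * q x) := by rw [e1, e2, hq0]; ring
    have hTy : ∀ e : ↥G.edgeFinset, T x e = y (ea e.1) - y (eb e.1) := by
      intro e; rw [hTdef, hydef]; rfl
    have hliftF : ∀ e ∈ G.edgeFinset, Sym2.lift ⟨F, hFsymm⟩ e = w e * (y (ea e) - y (eb e)) ^ 2 := by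
      intro e _
      conv_lhs => rw [← hout e]
      rw [Sym2.lift_mk, hwval e]
    have hsum := fiedler_sum_pairs G F hFsymm hFsupp
    have hsumc : ∑ e ∈ G.edgeFinset, 2 • Sym2.lift ⟨F, hFsymm⟩ e
        = ∑ e ∈ G.edgeFinset, 2 • (w e * (y (ea e) - y (eb e)) ^ 2) :=
      Finset.sum_congr rfl fun e he => by rw [hliftF e he]
    rw [hsumc] at hsum
    have hsum2 : ∑ e ∈ G.edgeFinset, 2 • (w e * (y (ea e) - y (eb e)) ^ 2)
        = 2 * ∑ e ∈ G.edgeFinset, w e * (y (ea e) - y (eb e)) ^ 2 := by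
      rw [Finset.mul_sum]
      exact Finset.sum_congr rfl fun e _ => by rw [two_smul, two_mul]
    have hgoal : ∑ e : ↥G.edgeFinset, c e * T x e ^ 2
        = - ∑ e ∈ G.edgeFinset, w e * (y (ea e) - y (eb e)) ^ 2 := by
      rw [← Finset.sum_neg_distrib, ← Finset.sum_coe_sort G.edgeFinset
        (fun e => -(w e * (y (ea e) - y (eb e)) ^ 2))]
      refine Finset.sum_congr rfl fun e _ => ?_
      show -w e.1 * T x e ^ 2 = -(w e.1 * (y (ea e.1) - y (eb e.1)) ^ 2)
      rw [hTy e]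
      ring
    rw [hgoal]
    rw [hexp, hsum2] at hsum
    linarith
  -- spectral-side representation of q
  have hq' : ∀ x, q x = ∑ i, d i * T' x i ^ 2 := by
    intro x
    have h1 : h = U * diagonal hherm.eigenvalues * star U := by
      have := hherm.spectral_theorem
      simpa using this
    have hdiag : diagonal (fun _ : V => lam) = lam • (1 : Matrix V V ℝ) := by
      ext i j
      by_cases hij : i = j
      · subst hij; simp
      · simp [Matrix.diagonal_apply_ne _ hij, Matrix.one_apply_ne hij]
    have h2 : lam • (1 : Matrix V V ℝ) = U * diagonal (fun _ : V => lam) * star U := by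
      rw [hdiag, mul_smul_comm, mul_one, smul_mul_assoc, hUU]
    have hdec : A = U * diagonal d * star U := by
      rw [hAdef, h1]
      conv_lhs => rw [h2]
      rw [← Matrix.sub_mul, ← Matrix.mul_sub, Matrix.diagonal_sub]
    show x ⬝ᵥ A *ᵥ x = _
    rw [hdec]
    have := fiedler_quad_conj U d x
    rw [this]
    refine Finset.sum_congr rfl fun i _ => ?_
    rw [hT'def]
    simp [Matrix.mulVecLin_apply]
  -- surjectivity of T
  have hTsurj : LinearMap.range T = ⊤ := by
    have htree : G.IsTree := ⟨hconn, hacyclic⟩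
    have hcardE : G.edgeFinset.card + 1 = Fintype.card V := htree.card_edgeFinset
    have hkerT : LinearMap.ker T ≤ Submodule.span ℝ {ψ} := by
      intro x hx
      rw [LinearMap.mem_ker] at hx
      have hadjconst : ∀ u v, G.Adj u v → x u * (ψ u)⁻¹ = x v * (ψ v)⁻¹ := by
        intro u v huv
        have he : s(u, v) ∈ G.edgeFinset := by
          rw [SimpleGraph.mem_edgeFinset, SimpleGraph.mem_edgeSet]; exact huv
        have h0 : T x ⟨s(u, v), he⟩ = 0 := congrFun hx _
        have h0' : x (ea s(u, v)) * (ψ (ea s(u, v)))⁻¹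
            = x (eb s(u, v)) * (ψ (eb s(u, v)))⁻¹ := by
          have : x (ea s(u, v)) * (ψ (ea s(u, v)))⁻¹
              - x (eb s(u, v)) * (ψ (eb s(u, v)))⁻¹ = 0 := h0
          linarith
        have hrep := hout s(u, v)
        rcases Sym2.eq_iff.mp hrep with ⟨h1, h2⟩ | ⟨h1, h2⟩
        · have e1 : x u * (ψ u)⁻¹ = x (ea s(u, v)) * (ψ (ea s(u, v)))⁻¹ := by rw [h1]
          have e2 : x (eb s(u, v)) * (ψ (eb s(u, v)))⁻¹ = x v * (ψ v)⁻¹ := by rw [h2]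
          exact e1.trans (h0'.trans e2)
        · have e1 : x u * (ψ u)⁻¹ = x (eb s(u, v)) * (ψ (eb s(u, v)))⁻¹ := by rw [h2]
          have e2 : x (ea s(u, v)) * (ψ (ea s(u, v)))⁻¹ = x v * (ψ v)⁻¹ := by rw [h1]
          exact e1.trans (h0'.symm.trans e2)
      have hcst : ∀ u v, x u * (ψ u)⁻¹ = x v * (ψ v)⁻¹ := by
        intro u v
        obtain ⟨p⟩ := hconn.preconnected u v
        induction p with
        | nil => rfl
        | cons ha p ih => exact (hadjconst _ _ ha).trans ih
      obtain ⟨v₀⟩ : Nonempty V := hconn.nonempty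
      have hxeq : x = (x v₀ * (ψ v₀)⁻¹) • ψ := by
        funext v
        rw [Pi.smul_apply, smul_eq_mul, ← hcst v v₀, mul_assoc,
          inv_mul_cancel₀ (hψv v), mul_one]
      rw [hxeq]
      exact Submodule.smul_mem _ _ (Submodule.mem_span_singleton_self ψ)
    have hker1 : finrank ℝ (LinearMap.ker T) ≤ 1 := by
      calc finrank ℝ (LinearMap.ker T) ≤ finrank ℝ (Submodule.span ℝ {ψ}) :=
            Submodule.finrank_mono hkerT
        _ = 1 := finrank_span_singleton hψ
    apply Submodule.eq_top_of_finrank_eq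
    have hrn := LinearMap.finrank_range_add_finrank_ker T
    have hle : finrank ℝ (LinearMap.range T) ≤ finrank ℝ (↥G.edgeFinset → ℝ) :=
      Submodule.finrank_le _
    have hdim1 : finrank ℝ (V → ℝ) = Fintype.card V := finrank_pi ℝ
    have hdim2 : finrank ℝ (↥G.edgeFinset → ℝ) = G.edgeFinset.card := by
      rw [finrank_pi]; exact Fintype.card_coe _
    rw [hdim1] at hrn
    rw [hdim2] at hle ⊢
    omega
  -- surjectivity of T'
  have hT'surj : LinearMap.range T' = ⊤ := by
    rw [LinearMap.range_eq_top]
    intro z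
    refine ⟨U *ᵥ z, ?_⟩
    rw [hT'def]
    simp only [mulVecLin_apply, mulVec_mulVec, hUU', one_mulVec]
  -- the central equality of counts
  have hkey := fiedler_count_eq q c d T T' hTsurj hT'surj hq hq'
  -- counting conversions
  have hrhs : {i | hherm.eigenvalues i < lam}.ncard
      = (Finset.univ.filter fun i => d i < 0).card := by
    have hset : {i | hherm.eigenvalues i < lam}
        = ↑(Finset.univ.filter fun i => d i < 0) := by
      ext i; simp [hddef, sub_neg]
    rw [hset, Set.ncard_coe_finset]
  set P : V × V → Prop := fun p => G.Adj p.1 p.2 ∧ 0 < ψ p.1 * h p.1 p.2 * ψ p.2 with hPdef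
  have hlhs1 : {p : V × V | G.Adj p.1 p.2 ∧ 0 < ψ p.1 * h p.1 p.2 * ψ p.2}.ncard
      = ((Finset.univ ×ˢ Finset.univ).filter P).card := by
    rw [← Set.ncard_coe_finset]
    congr 1
    ext p
    simp [hPdef]
  set f : V → V → ℕ := fun r s => if G.Adj r s ∧ 0 < ψ r * h r s * ψ s then 1 else 0 with hfdef
  have hfsymm : ∀ r s, f r s = f s r := by
    intro r s
    rw [hfdef]
    simp only
    have hiff : (G.Adj r s ∧ 0 < ψ r * h r s * ψ s) ↔ (G.Adj s r ∧ 0 < ψ s * h s r * ψ r) := by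
      rw [SimpleGraph.adj_comm, hwsymm r s]
    simp [hiff]
  have hfsupp : ∀ r s, ¬ G.Adj r s → f r s = 0 := by
    intro r s hadj
    rw [hfdef]
    simp [hadj]
  have hcount1 : ((Finset.univ ×ˢ Finset.univ).filter P).card = ∑ r, ∑ s, f r s := by
    rw [Finset.card_filter, ← Finset.sum_product']
  have hcount2 := fiedler_sum_pairs G f hfsymm hfsupp
  have hlift : ∀ e ∈ G.edgeFinset, Sym2.lift ⟨f, hfsymm⟩ e
      = if 0 < w e then 1 else 0 := by
    intro e he
    have hadj : G.Adj (ea e) (eb e) := by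
      rw [SimpleGraph.mem_edgeFinset] at he
      rw [← hout e, SimpleGraph.mem_edgeSet] at he
      exact he
    conv_lhs => rw [← hout e]
    rw [Sym2.lift_mk, hwval e]
    show (if G.Adj (ea e) (eb e) ∧ 0 < ψ (ea e) * h (ea e) (eb e) * ψ (eb e) then 1 else 0) = _
    simp [hadj]
  have hfinal : ∑ e ∈ G.edgeFinset, 2 • Sym2.lift ⟨f, hfsymm⟩ e
      = 2 * (Finset.univ.filter fun i : ↥G.edgeFinset => c i < 0).card := by
    have hstep : ∑ e ∈ G.edgeFinset, 2 • Sym2.lift ⟨f, hfsymm⟩ e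
        = ∑ e ∈ G.edgeFinset, 2 * (if 0 < w e then 1 else 0) :=
      Finset.sum_congr rfl fun e he => by rw [hlift e he, smul_eq_mul]
    rw [hstep, ← Finset.mul_sum]
    congr 1
    rw [← Finset.sum_coe_sort G.edgeFinset (fun e => if 0 < w e then 1 else 0)]
    rw [Finset.card_filter]
    refine Finset.sum_congr rfl fun e _ => ?_
    have hce : c e < 0 ↔ 0 < w e.1 := neg_lt_zero
    simp [hce]
  rw [hlhs1, hcount1, hcount2, hfinal, hkey, hrhs]
end
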